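/- Finite étale algebras over a field are algebras of Galois-equivariant functions (essential image of Grothendieck's Galois equivalence): let F be a field, S a separable closure of F, and Γ = Gal(S/F) its group of F-algebra automorphisms. Let B be a commutative F-algebra that is finite-dimensional over F and formally unramified (equivalently, finite étale) over F. Then the set A = Hom_{F-alg}(B, S) of F-algebra homomorphisms B → S is finite, Γ acts on A by postcomposition, and the evaluation map ev : B → (A → S), ev(b)(ψ) = ψ(b), is an injective F-algebra homomorphism whose image is exactly the set of Γ-equivariant functions u : A → S, i.e. those with u(γ ∘ ψ) = γ(u(ψ)) for all γ ∈ Γ and ψ ∈ A. In particular B is isomorphic as an F-algebra to the algebra of Γ-equivariant functions from A to S. -/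

import Mathlib

open Polynomial

section Aux

variable {F S : Type*} [Field F] [Field S] [Algebra F S]

/-- An element of a separable closure fixed by all automorphisms lies in the base field. -/
lemma fixed_mem_range_aux [IsSepClosure F S] {s : S}
    (h : ∀ γ : S ≃ₐ[F] S, γ s = s) : ∃ k : F, algebraMap F S k = s := by
  have hnormal : Normal F S := inferInstance
  have hint : IsIntegral F s := hnormal.isIntegral s
  have hsep : (minpoly F s).Separable := Algebra.IsSeparable.isSeparable F s
  have hsp : Splits ((minpoly F s).map (algebraMap F S)) := hnormal.splits s
  have hroots : ∀ x ∈ (minpoly F s).aroots S, x = s := by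
    intro x hx
    rw [Polynomial.mem_aroots] at hx
    obtain ⟨σ, hσ⟩ := minpoly.exists_algEquiv_of_root' hint.isAlgebraic hx.2
    rw [← hσ, h σ]
  have hnodup : ((minpoly F s).aroots S).Nodup := Polynomial.nodup_roots (hsep.map)
  have hle : (minpoly F s).aroots S ≤ {s} := by
    rw [Multiset.le_iff_subset hnodup]
    intro x hx
    rw [hroots x hx]
    exact Multiset.mem_singleton_self s
  have hcard : (minpoly F s).natDegree ≤ 1 := by
    rw [← Polynomial.natDegree_map (algebraMap F S), hsp.natDegree_eq_card_roots]
    simpa using Multiset.card_le_card hle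
  have hdeg : (minpoly F s).degree = 1 := by
    have h1 : 0 < (minpoly F s).natDegree := minpoly.natDegree_pos hint
    rw [Polynomial.degree_eq_natDegree (minpoly.ne_zero hint)]
    exact_mod_cast le_antisymm hcard h1
  have := minpoly.degree_eq_one_iff.mp hdeg
  obtain ⟨k, hk⟩ := this
  exact ⟨k, hk⟩

end Aux

section Aux2

variable {F S : Type*} [Field F] [Field S] [Algebra F S] [IsSepClosure F S]

lemma exists_algEquiv_comp {L : Type*} [Field L] [Algebra F L] [Algebra.IsSeparable F L]
    (φ₀ φ : L →ₐ[F] S) : ∃ γ : S ≃ₐ[F] S, ∀ x, γ (φ₀ x) = φ x := by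
  haveI : IsSepClosed S := IsSepClosure.sep_closed F
  letI a1 : Algebra L S := φ₀.toAlgebra
  haveI : IsScalarTower F L S := IsScalarTower.of_algebraMap_eq fun a => (φ₀.commutes a).symm
  haveI : Algebra.IsSeparable L S := Algebra.isSeparable_tower_top_of_isSeparable F L S
  obtain ⟨σ, hσ⟩ := IsSepClosed.surjective_restrictDomain_of_isSeparable
    (K := F) (L := L) (M := S) (E := S) φ
  have hb := AlgHom.normal_bijective F S S σ
  refine ⟨AlgEquiv.ofBijective σ hb, fun x => ?_⟩
  exact AlgHom.congr_fun hσ x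

lemma field_case (L : Type*) [Field L] [Algebra F L] [Algebra.IsSeparable F L]
    (u : (L →ₐ[F] S) → S)
    (hu : ∀ (γ : S ≃ₐ[F] S) (ψ : L →ₐ[F] S), u (γ.toAlgHom.comp ψ) = γ (u ψ)) :
    ∃ b : L, ∀ ψ : L →ₐ[F] S, ψ b = u ψ := by
  haveI : IsSepClosed S := IsSepClosure.sep_closed F
  let φ₀ : L →ₐ[F] S := IsSepClosed.lift
  letI a1 : Algebra L S := φ₀.toAlgebra
  haveI : IsScalarTower F L S := IsScalarTower.of_algebraMap_eq fun a => (φ₀.commutes a).symm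
  haveI : Algebra.IsSeparable L S := Algebra.isSeparable_tower_top_of_isSeparable F L S
  haveI : IsSepClosure L S := ⟨inferInstance, inferInstance⟩
  have hfix : ∀ γ : S ≃ₐ[L] S, γ (u φ₀) = u φ₀ := by
    intro γ
    have hres : ((γ.restrictScalars F).toAlgHom.comp φ₀) = φ₀ := by
      ext x
      exact γ.commutes x
    have h2 := hu (γ.restrictScalars F) φ₀
    rw [hres] at h2
    exact h2.symm
  obtain ⟨b, hb⟩ := fixed_mem_range_aux hfix
  refine ⟨b, fun ψ => ?_⟩
  obtain ⟨γ, hγ⟩ := exists_algEquiv_comp φ₀ ψ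
  have hcomp : γ.toAlgHom.comp φ₀ = ψ := AlgHom.ext hγ
  have h3 := hu γ φ₀
  rw [hcomp] at h3
  rw [h3, ← hb, ← hγ b]
  rfl

omit [IsSepClosure F S] in
lemma ker_isMaximal {B : Type*} [CommRing B] [Algebra F B] [FiniteDimensional F B]
    (ψ : B →ₐ[F] S) : (RingHom.ker ψ).IsMaximal := by
  haveI : Nontrivial B := ψ.toRingHom.domain_nontrivial
  haveI hp : (RingHom.ker ψ).IsPrime := RingHom.ker_isPrime ψ.toRingHom
  apply Ideal.Quotient.maximal_of_isField
  haveI : Module.Finite F (B ⧸ RingHom.ker ψ) :=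
    Module.Finite.of_surjective (Ideal.Quotient.mkₐ F _).toLinearMap
      (Ideal.Quotient.mkₐ_surjective F _)
  exact (Algebra.IsIntegral.isField_iff_isField
    (algebraMap F (B ⧸ RingHom.ker ψ)).injective).mp (Field.toIsField F)

end Aux2

/-- Finite étale algebras over a field are algebras of Galois-equivariant functions: if
`B` is a commutative, finite-dimensional, formally unramified (i.e. finite étale)
`F`-algebra, `S` a separable closure of `F` and `Γ = Gal(S/F)`, then the set
`A = Hom_{F-alg}(B, S)` is finite and the evaluation map `ev : B → (A → S)`,
`ev(b)(ψ) = ψ(b)`, is an injective `F`-algebra homomorphism whose range is exactly the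
set of `Γ`-equivariant functions `A → S` (for the `Γ`-action on `A` by
postcomposition). -/
theorem finite_etale_algebra_as_equivariant_functions (F S : Type) [Field F] [Field S]
    [Algebra F S] [IsSepClosure F S]
    (B : Type) [CommRing B] [Algebra F B] [FiniteDimensional F B]
    [Algebra.FormallyUnramified F B] :
    Finite (B →ₐ[F] S) ∧
    ∃ ev : B →ₐ[F] ((B →ₐ[F] S) → S),
      (∀ (b : B) (ψ : B →ₐ[F] S), ev b ψ = ψ b) ∧
      Function.Injective ev ∧
      Set.range ev = {u : (B →ₐ[F] S) → S |
        ∀ (γ : S ≃ₐ[F] S) (ψ : B →ₐ[F] S), u (γ.toAlgHom.comp ψ) = γ (u ψ)} := by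
  haveI : IsSepClosed S := IsSepClosure.sep_closed F
  haveI : IsArtinianRing B := isArtinian_of_tower F inferInstance
  haveI : Algebra.EssFiniteType F B := inferInstance
  haveI : IsReduced B := Algebra.FormallyUnramified.isReduced_of_field F B
  haveI := (IsArtinianRing.setOfPred_isMaximal_finite B).to_subtype
  refine ⟨inferInstance, Pi.algHom _ _ (fun ψ => ψ), fun _ _ => rfl, ?_, ?_⟩
  · -- injectivity
    rw [injective_iff_map_eq_zero]
    intro b hb
    by_contra hb0
    have hnn : ¬ IsNilpotent b := fun h => hb0 (h.eq_zero)
    rw [nilpotent_iff_mem_prime] at hnn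
    push_neg at hnn
    obtain ⟨p, hp, hbp⟩ := hnn
    haveI := hp
    haveI : p.IsMaximal := IsArtinianRing.isMaximal_of_isPrime p
    letI : Field (B ⧸ p) := Ideal.Quotient.field p
    haveI : Module.Finite F (B ⧸ p) :=
      Module.Finite.of_surjective (Ideal.Quotient.mkₐ F _).toLinearMap
        (Ideal.Quotient.mkₐ_surjective F _)
    haveI : Algebra.IsSeparable F (B ⧸ p) := Algebra.FormallyUnramified.isSeparable F (B ⧸ p)
    let φ : (B ⧸ p) →ₐ[F] S := IsSepClosed.lift
    have h0 : φ (Ideal.Quotient.mk p b) = 0 := congrFun hb (φ.comp (Ideal.Quotient.mkₐ F p))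
    have : (Ideal.Quotient.mk p b) = 0 := φ.toRingHom.injective (by simpa using h0)
    exact hbp (Ideal.Quotient.eq_zero_iff_mem.mp this)
  · -- range
    ext u
    constructor
    · rintro ⟨b, rfl⟩ γ ψ
      rfl
    · intro hu
      have key : ∀ I : {I : Ideal B | I.IsMaximal}, ∃ c : B ⧸ I.1,
          ∀ φ : (B ⧸ I.1) →ₐ[F] S, φ c = u (φ.comp (Ideal.Quotient.mkₐ F I.1)) := by
        intro I
        haveI : I.1.IsMaximal := I.2
        letI : Field (B ⧸ I.1) := Ideal.Quotient.field I.1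
        haveI : Module.Finite F (B ⧸ I.1) :=
          Module.Finite.of_surjective (Ideal.Quotient.mkₐ F _).toLinearMap
            (Ideal.Quotient.mkₐ_surjective F _)
        haveI : Algebra.IsSeparable F (B ⧸ I.1) :=
          Algebra.FormallyUnramified.isSeparable F (B ⧸ I.1)
        apply field_case (B ⧸ I.1) (fun φ => u (φ.comp (Ideal.Quotient.mkₐ F I.1)))
        intro γ φ
        have : (γ.toAlgHom.comp φ).comp (Ideal.Quotient.mkₐ F I.1)
            = γ.toAlgHom.comp (φ.comp (Ideal.Quotient.mkₐ F I.1)) := by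
          rw [AlgHom.comp_assoc]
        rw [this]
        exact hu γ _
      choose c hc using key
      obtain ⟨b, hb⟩ := Ideal.pi_quotient_surjective
        (fun I J hne => Ideal.isCoprime_iff_sup_eq.mpr
          (Ideal.IsMaximal.coprime_of_ne I.2 J.2 (fun h => hne (Subtype.ext h)))) c
      refine ⟨b, funext fun ψ => ?_⟩
      have hm : (RingHom.ker ψ).IsMaximal := ker_isMaximal ψ
      set I : {I : Ideal B | I.IsMaximal} := ⟨RingHom.ker ψ, hm⟩
      have hψ0 : ∀ a ∈ RingHom.ker ψ, ψ a = 0 := fun a ha => ha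
      let φ : (B ⧸ RingHom.ker ψ) →ₐ[F] S := Ideal.Quotient.liftₐ _ ψ hψ0
      have hfac : φ.comp (Ideal.Quotient.mkₐ F (RingHom.ker ψ)) = ψ := by
        ext x
        simp [φ]
        exact Ideal.Quotient.lift_mk _ _ _
      have hbI : (Ideal.Quotient.mk (RingHom.ker ψ) b) = c I := hb I
      calc ψ b = φ (Ideal.Quotient.mk (RingHom.ker ψ) b) := (AlgHom.congr_fun hfac b).symm
        _ = φ (c I) := by rw [hbI]
        _ = u (φ.comp (Ideal.Quotient.mkₐ F I.1)) := hc I φ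
        _ = u ψ := congrArg u hfac
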